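/- The curve γ : ℝ → ℝⁿ, γ(t) = t³a for a fixed nonzero vector a ∈ ℝⁿ, is not harmonic (its tension field γ'' = 6ta is not identically zero), yet its biharmonic stress-energy tensor S₂ vanishes identically. -/
import Mathlib


open scoped RealInnerProductSpace

lemma deriv_pow_smul {n : ℕ} (a : EuclideanSpace ℝ (Fin n)) (k : ℕ) :
    deriv (fun t : ℝ => t ^ k • a) = fun t : ℝ => (k * t ^ (k - 1)) • a := by
  funext t
  rw [deriv_smul_const (by fun_prop)]
  simp [deriv_pow]

/-- the curve `γ(t) = t³ a` (`a ≠ 0`) is not harmonic (its tension field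
`γ'' = 6 t a` does not vanish identically) but its biharmonic stress-energy tensor
`S₂ = (1/2)|γ''|² − ⟨γ', γ'''⟩` vanishes identically. -/
theorem stmt_5 {n : ℕ} (a : EuclideanSpace ℝ (Fin n)) (ha : a ≠ 0)
    (γ : ℝ → EuclideanSpace ℝ (Fin n)) (hγ : ∀ s : ℝ, γ s = s ^ 3 • a) :
    (¬ ∀ s : ℝ, iteratedDeriv 2 γ s = 0) ∧
      (∀ s : ℝ, (1 / 2) * ‖iteratedDeriv 2 γ s‖ ^ 2
          - ⟪deriv γ s, iteratedDeriv 3 γ s⟫ = 0) := by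
  have hγ' : γ = fun t : ℝ => t ^ 3 • a := funext hγ
  subst hγ'
  have h1 : deriv (fun t : ℝ => t ^ 3 • a) = fun t : ℝ => (3 * t ^ 2) • a := by
    simpa using deriv_pow_smul a 3
  have h2 : iteratedDeriv 2 (fun t : ℝ => t ^ 3 • a) = fun t : ℝ => (6 * t) • a := by
    rw [iteratedDeriv_succ, iteratedDeriv_one, h1]
    funext t
    have : (fun t : ℝ => (3 * t ^ 2) • a) = fun t : ℝ => t ^ 2 • ((3:ℝ) • a) := by
      funext t; rw [smul_smul]; ring_nf
    rw [this, deriv_pow_smul]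
    simp [smul_smul]; ring_nf
  have h3 : iteratedDeriv 3 (fun t : ℝ => t ^ 3 • a) = fun _ : ℝ => (6 : ℝ) • a := by
    rw [iteratedDeriv_succ, h2]
    funext t
    have : (fun t : ℝ => (6 * t) • a) = fun t : ℝ => t ^ 1 • ((6:ℝ) • a) := by
      funext t; rw [smul_smul]; ring_nf
    rw [this, deriv_pow_smul]
    simp [smul_smul]
  constructor
  · intro h
    have := h 1
    rw [h2] at this
    simp only [mul_one] at this
    exact ha (by simpa using smul_eq_zero.mp this |>.resolve_left (by norm_num))
  · intro s
    rw [h1, h2, h3, norm_smul, real_inner_smul_left, real_inner_smul_right,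
      real_inner_self_eq_norm_sq]
    simp [mul_pow]
    ring
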